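/- Every LCM subsemigroup N of the multiplicative monoid of positive natural numbers is freely generated by its set of irreducible elements: every element of N admits a factorization into irreducibles of N, and this factorization is unique up to permutation of the factors. -/

import Mathlib

/-- The "ideal" `mN` of a submonoid `N ⊆ ℕ^×`. -/
def pideal (N : Submonoid ℕ+) (m : ℕ+) : Set ℕ+ := {x | ∃ k ∈ N, x = m * k}

/-- An LCM submonoid of `ℕ^×`: every `mN ∩ nN` is of the form `kN`. -/
def IsLCMSubmonoid (N : Submonoid ℕ+) : Prop :=
  ∀ m ∈ N, ∀ n ∈ N, ∃ k ∈ N, pideal N m ∩ pideal N n = pideal N k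

/-- Irreducible elements of a submonoid `N ⊆ ℕ^×`. -/
def IrrIn (N : Submonoid ℕ+) (n : ℕ+) : Prop :=
  n ∈ N ∧ n ≠ 1 ∧ ∀ k ∈ N, ∀ l ∈ N, n = k * l → k = 1 ∨ l = 1

private lemma pnat_mul_eq_one {p c : ℕ+} (h : (1 : ℕ+) = p * c) : p = 1 := by
  have h' : (p : ℕ) * (c : ℕ) = 1 := by exact_mod_cast h.symm
  have := Nat.eq_one_of_mul_eq_one_right h'
  exact PNat.coe_injective this

/-- Irreducibles are prime in an LCM submonoid. -/
lemma irr_prime (N : Submonoid ℕ+) (hN : IsLCMSubmonoid N) {p a b : ℕ+}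
    (hp : IrrIn N p) (ha : a ∈ N) (hb : b ∈ N)
    (h : ∃ c ∈ N, a * b = p * c) :
    (∃ c ∈ N, a = p * c) ∨ (∃ c ∈ N, b = p * c) := by
  obtain ⟨k, hkN, heq⟩ := hN p hp.1 a ha
  -- k ∈ pN ∩ aN
  have hk_mem : k ∈ pideal N p ∩ pideal N a := by
    rw [heq]; exact ⟨1, N.one_mem, (mul_one k).symm⟩
  obtain ⟨⟨s, hs, hks⟩, ⟨t, ht, hkt⟩⟩ := hk_mem
  -- p*a ∈ pN ∩ aN = kN
  have hpa : p * a ∈ pideal N k := by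
    rw [← heq]
    exact ⟨⟨a, ha, rfl⟩, ⟨p, hp.1, mul_comm p a⟩⟩
  obtain ⟨g, hg, hpag⟩ := hpa
  -- p * a = k * g = p * s * g, so a = s * g
  have hasg : a = s * g := by
    apply mul_left_cancel (a := p)
    rw [hpag, hks, mul_assoc]
  -- p * a = a * t * g, so p = t * g
  have hptg : p = t * g := by
    apply mul_left_cancel (a := a)
    rw [mul_comm a p, hpag, hkt, mul_assoc]
  rcases hp.2.2 t ht g hg hptg with h1 | h1
  · -- t = 1, so p = g, and a = s * p
    left
    refine ⟨s, hs, ?_⟩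
    rw [hasg, show g = p from by rw [hptg, h1, one_mul], mul_comm]
  · -- g = 1, so k = p * a
    have hk : k = p * a := by rw [hpag, h1, mul_one]
    obtain ⟨c, hc, habc⟩ := h
    have hab : a * b ∈ pideal N k := by
      rw [← heq]
      exact ⟨⟨c, hc, habc⟩, ⟨b, hb, rfl⟩⟩
    obtain ⟨w, hw, habw⟩ := hab
    right
    refine ⟨w, hw, ?_⟩
    apply mul_left_cancel (a := a)
    rw [habw, hk, mul_comm p a, mul_assoc]

lemma irr_dvd_prod (N : Submonoid ℕ+) (hN : IsLCMSubmonoid N) {p : ℕ+}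
    (hp : IrrIn N p) :
    ∀ l : List ℕ+, (∀ q ∈ l, q ∈ N) → (∃ c ∈ N, l.prod = p * c) →
      ∃ q ∈ l, ∃ c ∈ N, q = p * c := by
  intro l
  induction l with
  | nil =>
    intro _ ⟨c, _, hc⟩
    simp only [List.prod_nil] at hc
    exact absurd (pnat_mul_eq_one hc) hp.2.1
  | cons q t ih =>
    intro hmem hdvd
    simp only [List.prod_cons] at hdvd
    have hqN : q ∈ N := hmem q (List.mem_cons_self)
    have htN : t.prod ∈ N := list_prod_mem (fun x hx => hmem x (List.mem_cons_of_mem q hx))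
    rcases irr_prime N hN hp hqN htN hdvd with h | h
    · exact ⟨q, List.mem_cons_self, h⟩
    · obtain ⟨q', hq', hc⟩ := ih (fun x hx => hmem x (List.mem_cons_of_mem q hx)) h
      exact ⟨q', List.mem_cons_of_mem q hq', hc⟩

lemma unique_fact (N : Submonoid ℕ+) (hN : IsLCMSubmonoid N) :
    ∀ l₁ l₂ : List ℕ+, (∀ p ∈ l₁, IrrIn N p) → (∀ p ∈ l₂, IrrIn N p) →
      l₁.prod = l₂.prod → l₁.Perm l₂ := by
  intro l₁
  induction l₁ with
  | nil =>
    intro l₂ _ h₂ hprod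
    simp only [List.prod_nil] at hprod
    cases l₂ with
    | nil => exact List.Perm.refl _
    | cons q t =>
      exfalso
      simp only [List.prod_cons] at hprod
      exact (h₂ q (List.mem_cons_self)).2.1 (pnat_mul_eq_one hprod)
  | cons p t ih =>
    intro l₂ h₁ h₂ hprod
    have hp : IrrIn N p := h₁ p (List.mem_cons_self)
    have htN : t.prod ∈ N := list_prod_mem (fun x hx => (h₁ x (List.mem_cons_of_mem p hx)).1)
    have hdvd : ∃ c ∈ N, l₂.prod = p * c := by
      exact ⟨t.prod, htN, by rw [← hprod, List.prod_cons]⟩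
    obtain ⟨q, hq, c, hc, hqc⟩ := irr_dvd_prod N hN hp l₂ (fun x hx => (h₂ x hx).1) hdvd
    have hqirr : IrrIn N q := h₂ q hq
    have hqp : q = p := by
      rcases hqirr.2.2 p hp.1 c hc hqc with h | h
      · exact absurd h hp.2.1
      · rw [hqc, h, mul_one]
    have hperm : l₂.Perm (q :: l₂.erase q) := List.perm_cons_erase hq
    have hprod2 : l₂.prod = q * (l₂.erase q).prod := by
      rw [hperm.prod_eq, List.prod_cons]
    have hteq : t.prod = (l₂.erase q).prod := by
      apply mul_left_cancel (a := p)
      rw [← List.prod_cons, hprod, hprod2, hqp]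
    have herase_irr : ∀ x ∈ l₂.erase q, IrrIn N x :=
      fun x hx => h₂ x (List.mem_of_mem_erase hx)
    have := ih (l₂.erase q) (fun x hx => h₁ x (List.mem_cons_of_mem p hx)) herase_irr hteq
    refine (List.Perm.cons p this).trans ?_
    rw [← hqp]
    exact hperm.symm

lemma exists_fact (N : Submonoid ℕ+) (hN : IsLCMSubmonoid N) :
    ∀ x ∈ N, ∃ l : List ℕ+, (∀ p ∈ l, IrrIn N p) ∧ l.prod = x := by
  have key : ∀ n : ℕ, ∀ x : ℕ+, x ∈ N → (x : ℕ) ≤ n →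
      ∃ l : List ℕ+, (∀ p ∈ l, IrrIn N p) ∧ l.prod = x := by
    intro n
    induction n with
    | zero => intro x _ hx; exact absurd hx (by simpa using x.pos.not_le)
    | succ n ih =>
      intro x hxN hxle
      by_cases hx1 : x = 1
      · exact ⟨[], by simp, by simp [hx1]⟩
      by_cases hirr : IrrIn N x
      · exact ⟨[x], by simpa using hirr, by simp⟩
      · have : ¬(∀ k ∈ N, ∀ l ∈ N, x = k * l → k = 1 ∨ l = 1) := by
          intro h; exact hirr ⟨hxN, hx1, h⟩
        push_neg at this
        obtain ⟨k, hkN, l, hlN, hkl, hk1, hl1⟩ := this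
        have hk2 : 2 ≤ (k : ℕ) := by
          have : (1 : ℕ+) < k := lt_of_le_of_ne k.one_le (Ne.symm hk1)
          exact_mod_cast this
        have hl2 : 2 ≤ (l : ℕ) := by
          have : (1 : ℕ+) < l := lt_of_le_of_ne l.one_le (Ne.symm hl1)
          exact_mod_cast this
        have hxval : (x : ℕ) = (k : ℕ) * (l : ℕ) := by exact_mod_cast congrArg PNat.val hkl
        have hkle : (k : ℕ) ≤ n := by nlinarith
        have hlle : (l : ℕ) ≤ n := by nlinarith
        obtain ⟨lk, hlk, hlkp⟩ := ih k hkN hkle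
        obtain ⟨ll, hll, hllp⟩ := ih l hlN hlle
        refine ⟨lk ++ ll, ?_, ?_⟩
        · intro p hp
          rcases List.mem_append.mp hp with h | h
          exacts [hlk p h, hll p h]
        · rw [List.prod_append, hlkp, hllp, hkl]
  intro x hx
  exact key (x : ℕ) x hx le_rfl

theorem stmt7 (N : Submonoid ℕ+) (hN : IsLCMSubmonoid N) :
    ∀ x ∈ N,
      (∃ l : List ℕ+, (∀ p ∈ l, IrrIn N p) ∧ l.prod = x) ∧
      (∀ l₁ l₂ : List ℕ+, (∀ p ∈ l₁, IrrIn N p) → (∀ p ∈ l₂, IrrIn N p) →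
        l₁.prod = x → l₂.prod = x → l₁.Perm l₂) := by
  intro x hx
  refine ⟨exists_fact N hN x hx, ?_⟩
  intro l₁ l₂ h₁ h₂ hp₁ hp₂
  exact unique_fact N hN l₁ l₂ h₁ h₂ (hp₁.trans hp₂.symm)
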